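/- The K-vector spaces C^1(R,K) and N^1(R,K) are K-Banach spaces with respect to the norm |f|_1 = sup_{r∈ℛ} |b_r(f)γ_r^{-1}|, where f = ∑_{r∈ℛ} b_r(f)χ_r is the wavelet expansion of f. -/

import Mathlib

open scoped ENNReal NNReal
open Filter Topology

noncomputable section

namespace DSW

variable {K : Type*} [NontriviallyNormedField K] [CompleteSpace K] [IsUltrametricDist K]

/-- The ring of integers `R = {x : K | ‖x‖ ≤ 1}`, as a subset of `K`. -/
def Rint (K : Type*) [NontriviallyNormedField K] : Set K := {x : K | ‖x‖ ≤ 1}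

/-- `∇ⁿR`: the set of tuples of pairwise distinct elements of `R`. -/
def nabla (K : Type*) [NontriviallyNormedField K] (n : ℕ) : Set (Fin n → K) :=
  {x | (∀ i, ‖x i‖ ≤ 1) ∧ Function.Injective x}

/-- The `n`-th difference quotient `Φₙ f`. -/
def Phi (f : K → K) : ∀ n : ℕ, (Fin (n + 1) → K) → K
  | 0, x => f (x 0)
  | n + 1, x =>
      (Phi f n (Fin.cons (x 0) fun i => x i.succ.succ) -
        Phi f n (Fin.cons (x 1) fun i => x i.succ.succ)) / (x 0 - x 1)

/-- `f` is a `Cⁿ`-function: `Φₙ f` extends to a continuous function on `R^(n+1)`. -/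
def IsCn (f : K → K) (n : ℕ) : Prop :=
  ∃ g : (Fin (n + 1) → K) → K,
    ContinuousOn g {x | ∀ i, ‖x i‖ ≤ 1} ∧
      ∀ x : Fin (n + 1) → K, (∀ i, ‖x i‖ ≤ 1) → Function.Injective x → g x = Phi f n x

/-- `Dₙ f a = Φₙ f (a, …, a)`, defined (for `n ≥ 1`) as the limit of `Φₙ f` at the
diagonal point `(a, …, a)`, and `D₀ f = f`. -/
def Dq (f : K → K) : ℕ → K → K
  | 0 => f
  | n + 1 => fun a =>
      limUnder (𝓝[{x : Fin (n + 2) → K | Function.Injective x}] fun _ => a) (Phi f (n + 1))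

/-- `ψⱼ f (x, y) = (f x − f y − ∑_{l=1}^{j} (x−y)^l Dₗf y) / (x−y)^(j+1)`. -/
def psi (f : K → K) (j : ℕ) (x y : K) : K :=
  (f x - f y - ∑ l ∈ Finset.Icc 1 j, (x - y) ^ l * Dq f l y) / (x - y) ^ (j + 1)

variable (π : K) (𝒯 : Set K)

/-- `ℛₘ`: the set of sums `∑_{i<m} aᵢ πⁱ` with digits in `𝒯`. -/
def Rm (m : ℕ) : Set K :=
  {x | ∃ a : Fin m → K, (∀ i, a i ∈ 𝒯) ∧ x = ∑ i, a i * π ^ (i : ℕ)}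

/-- `ℛ = ⋃ₘ ℛₘ`. -/
def RR : Set K := ⋃ m, Rm π 𝒯 m

/-- `ℛ₊ = ℛ \ {0}`. -/
def RPlus : Set K := RR π 𝒯 \ {0}

/-- The length `l(r)`: the least `m` with `r ∈ ℛₘ`. -/
def len (r : K) : ℕ := sInf {m | r ∈ Rm π 𝒯 m}

/-- `χ_r`: characteristic function of the disk `{x : ‖x − r‖ ≤ ‖π‖^(l r)}`. -/
def chi (r x : K) : K := if ‖x - r‖ ≤ ‖π‖ ^ len π 𝒯 r then 1 else 0

/-- The truncation `x_m`: the unique element of `ℛₘ` with `‖x − x_m‖ ≤ ‖π‖^m`. -/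
def trunc (x : K) (m : ℕ) : K :=
  Classical.epsilon fun s => s ∈ Rm π 𝒯 m ∧ ‖x - s‖ ≤ ‖π‖ ^ m

/-- `r₋`: the truncation of `r` dropping the top digit. -/
def rminus (r : K) : K := trunc π 𝒯 r (len π 𝒯 r - 1)

open Classical in
/-- `γ_r = 1` if `r = 0`, `γ_r = r − r₋` otherwise. -/
def gamma (r : K) : K := if r = 0 then 1 else r - rminus π 𝒯 r

open Classical in
/-- The wavelet coefficients `b_r(f)` of a continuous function. -/
def b0 (f : K → K) (r : K) : K := if r = 0 then f 0 else f r - f (rminus π 𝒯 r)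

/-- `c` is the coefficient family of the expansion of `f` with respect to the wavelet
basis `{γ_r^(n−j) (x − r)^j χ_r(x) : r ∈ ℛ, 0 ≤ j ≤ n}` of `Cⁿ(R, K)`. -/
def IsExpansion (n : ℕ) (f : K → K) (c : K → ℕ → K) : Prop :=
  ∀ x ∈ Rint K, HasSum
    (fun p : RR π 𝒯 × Fin (n + 1) =>
      c ↑p.1 ↑p.2 * gamma π 𝒯 ↑p.1 ^ (n - (p.2 : ℕ)) * (x - ↑p.1) ^ (p.2 : ℕ) *
        chi π 𝒯 ↑p.1 x)
    (f x)

/-- The coefficients `b_r^{n,j}(f)` of the expansion of `f ∈ Cⁿ(R,K)`. -/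
def bcoef (n : ℕ) (f : K → K) : K → ℕ → K := Classical.epsilon (IsExpansion π 𝒯 n f)

/-- The norm `|f|_n` on `Cⁿ(R, K)`, with values in `ℝ≥0∞`; `|f|_0` is the sup norm and
`|f|_(n+1) = sup_{r ∈ ℛ} max_{0 ≤ j ≤ n} |b_r^{n,j}(f) γ_r⁻¹|`. -/
def CnNorm : ℕ → (K → K) → ℝ≥0∞
  | 0, f => ⨆ x : Rint K, (‖f ↑x‖₊ : ℝ≥0∞)
  | n + 1, f =>
      ⨆ r : RR π 𝒯, ⨆ j : Fin (n + 1),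
        (‖bcoef π 𝒯 n f ↑r ↑j * (gamma π 𝒯 ↑r)⁻¹‖₊ : ℝ≥0∞)

/-- `K` is a local field with uniformizer `π`, residue field of cardinality `q`, and
set of residue representatives `𝒯` (containing `0`). -/
structure LocalFieldData (π : K) (𝒯 : Set K) (q : ℕ) : Prop where
  one_lt_q : 1 < q
  norm_pi : ‖π‖ = (q : ℝ)⁻¹
  norm_discrete : ∀ x : K, x ≠ 0 → ∃ n : ℤ, ‖x‖ = ‖π‖ ^ n
  rep_subset : 𝒯 ⊆ Rint K
  zero_mem : (0 : K) ∈ 𝒯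
  finite_rep : 𝒯.Finite
  card_rep : Nat.card 𝒯 = q
  rep_unique : ∀ x : K, ‖x‖ ≤ 1 → ∃! t, t ∈ 𝒯 ∧ ‖x - t‖ < 1


/-- The norm `|f|₁ = sup_{r ∈ ℛ} |b_r(f) γ_r⁻¹|` on `C¹(R, K)`. -/
def wnorm1 (f : K → K) : ℝ≥0∞ :=
  ⨆ r : RR π 𝒯, (‖b0 π 𝒯 f ↑r * (gamma π 𝒯 ↑r)⁻¹‖₊ : ℝ≥0∞)

/-- The `Cⁿ`-antiderivation `Pₙ f (x) = ∑_{j<n} ∑_m f⁽ʲ⁾(x_m)/(j+1)! (x_{m+1} − x_m)^(j+1)`. -/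
def Pn (n : ℕ) (f : K → K) (x : K) : K :=
  ∑ j ∈ Finset.range n, ∑' m : ℕ,
    iteratedDeriv j f (trunc π 𝒯 x m) / (((j + 1).factorial : ℕ) : K) *
      (trunc π 𝒯 x (m + 1) - trunc π 𝒯 x m) ^ (j + 1)

/-- `Pₙ ∘ Pₙ₋₁ ∘ ⋯ ∘ P₁`. -/
def Tnaux : ℕ → (K → K) → K → K
  | 0, f => f
  | n + 1, f => Pn π 𝒯 (n + 1) (Tnaux n f)

/-! ### Auxiliary development -/

set_option linter.unusedSectionVars false
set_option linter.unreachableTactic false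
set_option linter.unusedTactic false

section Aux

lemma umax {a b : K} : ‖a - b‖ ≤ max ‖a‖ ‖b‖ := by
  simpa [sub_eq_add_neg] using IsUltrametricDist.norm_add_le_max a (-b)

lemma usub {a b c : K} : ‖a - c‖ ≤ max ‖a - b‖ ‖b - c‖ := by
  have : a - c = (a - b) + (b - c) := by ring
  rw [this]; exact IsUltrametricDist.norm_add_le_max _ _

lemma Phi_one (f : K → K) (x : Fin 2 → K) :
    Phi f 1 x = (f (x 0) - f (x 1)) / (x 0 - x 1) := by
  show (Phi f 0 _ - Phi f 0 _) / _ = _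
  show (f _ - f _) / _ = _
  simp [Fin.cons_zero]

lemma inj2 {x : Fin 2 → K} (h : x 0 ≠ x 1) : Function.Injective x := by
  intro i j hij
  fin_cases i <;> fin_cases j <;> simp_all [eq_comm]

lemma inj2' {x : Fin 2 → K} (h : Function.Injective x) : x 0 ≠ x 1 := by
  intro hx
  exact absurd (h hx) (by decide)

variable {π : K} {𝒯 : Set K} {q : ℕ}

section Basic

variable (hK : LocalFieldData π 𝒯 q)
include hK

lemma norm_pi_pos : 0 < ‖π‖ := by
  rw [hK.norm_pi]
  have : (0:ℝ) < q := by exact_mod_cast Nat.lt_of_lt_of_le Nat.zero_lt_one hK.one_lt_q.le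
  positivity

lemma norm_pi_lt_one : ‖π‖ < 1 := by
  rw [hK.norm_pi]
  have h1 : (1:ℝ) < q := by exact_mod_cast hK.one_lt_q
  rw [inv_lt_one_iff₀]; right; exact h1

lemma pi_ne_zero : π ≠ 0 := by
  intro h
  exact absurd (hK.norm_pi ▸ h ▸ norm_zero).symm (by
    have : (0:ℝ) < q := by exact_mod_cast Nat.lt_of_lt_of_le Nat.zero_lt_one hK.one_lt_q.le
    positivity)

lemma norm_pi_le_one : ‖π‖ ≤ 1 := (norm_pi_lt_one hK).le

/-- If `‖x‖ < ‖π‖^m` then `‖x‖ ≤ ‖π‖^(m+1)`. -/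
lemma norm_le_pow_succ {x : K} {m : ℕ} (h : ‖x‖ < ‖π‖ ^ m) : ‖x‖ ≤ ‖π‖ ^ (m + 1) := by
  rcases eq_or_ne x 0 with rfl | hx
  · simp only [norm_zero]
    positivity
  · obtain ⟨n, hn⟩ := hK.norm_discrete x hx
    have hπ0 := norm_pi_pos hK
    have hπ1 := norm_pi_lt_one hK
    rw [hn] at h ⊢
    have hmn : (m : ℤ) < n := by
      by_contra hc
      push_neg at hc
      have := (zpow_le_zpow_iff_right_of_lt_one₀ hπ0 hπ1).mpr hc
      rw [zpow_natCast] at this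
      exact absurd h (not_lt.mpr this)
    have : ((m + 1 : ℕ) : ℤ) ≤ n := by exact_mod_cast hmn
    have := (zpow_le_zpow_iff_right_of_lt_one₀ hπ0 hπ1).mpr this
    rwa [zpow_natCast] at this

end Basic

end Aux
section RmLemmas

variable {π : K} {𝒯 : Set K} {q : ℕ} (hK : LocalFieldData π 𝒯 q)
include hK

lemma zero_mem_Rm (m : ℕ) : (0 : K) ∈ Rm π 𝒯 m :=
  ⟨fun _ => 0, fun _ => hK.zero_mem, by simp⟩

lemma Rm_subset_Rint {m : ℕ} : Rm π 𝒯 m ⊆ Rint K := by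
  rintro x ⟨a, ha, rfl⟩
  refine IsUltrametricDist.norm_sum_le_of_forall_le_of_nonneg zero_le_one fun i _ => ?_
  rw [norm_mul]
  have h1 : ‖a i‖ ≤ 1 := hK.rep_subset (ha i)
  have h2 : ‖π ^ (i : ℕ)‖ ≤ 1 := by
    rw [norm_pow]
    exact pow_le_one₀ (norm_nonneg _) (norm_pi_le_one hK)
  calc ‖a i‖ * ‖π ^ (i:ℕ)‖ ≤ 1 * 1 := by
        exact mul_le_mul h1 h2 (norm_nonneg _) zero_le_one
    _ = 1 := by ring

lemma norm_le_one_of_mem_Rm {m : ℕ} {x : K} (hx : x ∈ Rm π 𝒯 m) : ‖x‖ ≤ 1 :=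
  Rm_subset_Rint hK hx

lemma Rm_snoc {m : ℕ} {y t : K} (hy : y ∈ Rm π 𝒯 m) (ht : t ∈ 𝒯) :
    y + t * π ^ m ∈ Rm π 𝒯 (m + 1) := by
  obtain ⟨a, ha, rfl⟩ := hy
  refine ⟨Fin.snoc a t, fun i => ?_, ?_⟩
  · induction i using Fin.lastCases with
    | last => simpa [Fin.snoc] using ht
    | cast i => simpa [Fin.snoc_castSucc] using ha i
  · rw [Fin.sum_univ_castSucc]
    simp [Fin.snoc_castSucc, Fin.snoc_last]

lemma Rm_zero_eq {x : K} (hx : x ∈ Rm π 𝒯 0) : x = 0 := by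
  obtain ⟨a, _, rfl⟩ := hx
  simp

lemma Rm_succ_iff {m : ℕ} {x : K} :
    x ∈ Rm π 𝒯 (m + 1) ↔ ∃ t ∈ 𝒯, ∃ y ∈ Rm π 𝒯 m, x = t + π * y := by
  constructor
  · rintro ⟨a, ha, rfl⟩
    refine ⟨a 0, ha 0, ∑ i : Fin m, a i.succ * π ^ (i : ℕ), ⟨_, fun i => ha _, rfl⟩, ?_⟩
    rw [Fin.sum_univ_succ, Finset.mul_sum]
    simp only [pow_zero, mul_one, Fin.val_succ]
    congr 1
    · simp
    · exact Finset.sum_congr rfl fun i _ => by ring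
  · rintro ⟨t, ht, y, ⟨a, ha, rfl⟩, rfl⟩
    refine ⟨Fin.cons t a, fun i => ?_, ?_⟩
    · induction i using Fin.cases with
      | zero => simpa using ht
      | succ i => simpa [Fin.cons_succ] using ha i
    · rw [Fin.sum_univ_succ, Finset.mul_sum]
      simp only [Fin.cons_zero, Fin.cons_succ, pow_zero, mul_one, Fin.val_succ]
      congr 1
      · simp
      · exact Finset.sum_congr rfl fun i _ => by ring

lemma Rm_subset_succ {m : ℕ} : Rm π 𝒯 m ⊆ Rm π 𝒯 (m + 1) := by
  intro x hx
  simpa using Rm_snoc hK hx hK.zero_mem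

lemma Rm_mono {m m' : ℕ} (h : m ≤ m') : Rm π 𝒯 m ⊆ Rm π 𝒯 m' := by
  induction m' with
  | zero => rw [Nat.le_zero] at h; subst h; exact subset_rfl
  | succ n ih =>
    rcases Nat.lt_or_ge m (n + 1) with h' | h'
    · exact (ih (Nat.lt_succ_iff.mp h')).trans (Rm_subset_succ hK)
    · have : m = n + 1 := le_antisymm h h'
      subst this; exact subset_rfl

/-- Uniqueness: two elements of `ℛₘ` within distance `‖π‖^m` are equal. -/
lemma Rm_unique : ∀ (m : ℕ) {s s' : K}, s ∈ Rm π 𝒯 m → s' ∈ Rm π 𝒯 m →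
    ‖s - s'‖ ≤ ‖π‖ ^ m → s = s' := by
  intro m
  induction m with
  | zero => intro s s' hs hs' _; rw [Rm_zero_eq hK hs, Rm_zero_eq hK hs']
  | succ n ih =>
    intro s s' hs hs' hd
    obtain ⟨t, ht, y, hy, rfl⟩ := (Rm_succ_iff hK).mp hs
    obtain ⟨t', ht', y', hy', rfl⟩ := (Rm_succ_iff hK).mp hs'
    have hπ0 := norm_pi_pos hK
    have hπ1 := norm_pi_lt_one hK
    have hby : ‖π * y‖ ≤ ‖π‖ := by
      rw [norm_mul]
      calc ‖π‖ * ‖y‖ ≤ ‖π‖ * 1 :=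
            mul_le_mul_of_nonneg_left (norm_le_one_of_mem_Rm hK hy) hπ0.le
        _ = ‖π‖ := mul_one _
    have hby' : ‖π * y'‖ ≤ ‖π‖ := by
      rw [norm_mul]
      calc ‖π‖ * ‖y'‖ ≤ ‖π‖ * 1 :=
            mul_le_mul_of_nonneg_left (norm_le_one_of_mem_Rm hK hy') hπ0.le
        _ = ‖π‖ := mul_one _
    have hdle : ‖(t + π * y) - (t' + π * y')‖ ≤ ‖π‖ := by
      refine hd.trans ?_
      calc ‖π‖ ^ (n + 1) ≤ ‖π‖ ^ 1 := pow_le_pow_of_le_one hπ0.le hπ1.le (by omega)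
        _ = ‖π‖ := pow_one _
    have htt' : ‖t - t'‖ ≤ ‖π‖ := by
      have h1 : t - t' = (t + π * y - (t' + π * y')) + (π * y' - π * y) := by ring
      rw [h1]
      refine (IsUltrametricDist.norm_add_le_max _ _).trans (max_le hdle ?_)
      have : π * y' - π * y = π * y' - π * y := rfl
      calc ‖π * y' - π * y‖ ≤ max ‖π * y'‖ ‖π * y‖ := umax
        _ ≤ ‖π‖ := max_le hby' hby
    have htt : t = t' := by
      have hu := hK.rep_unique t (hK.rep_subset ht)
      obtain ⟨u, _, hun⟩ := hu
      have e1 : t = u := hun t ⟨ht, by simp⟩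
      have e2 : t' = u := hun t' ⟨ht', htt'.trans_lt hπ1⟩
      rw [e1, e2]
    subst htt
    have hyy : y = y' := by
      refine ih hy hy' ?_
      have h2 : π * (y - y') = (t + π * y) - (t + π * y') := by ring
      have h3 : ‖π‖ * ‖y - y'‖ ≤ ‖π‖ * ‖π‖ ^ n := by
        rw [← norm_mul, h2]
        calc ‖(t + π * y) - (t + π * y')‖ ≤ ‖π‖ ^ (n + 1) := hd
          _ = ‖π‖ * ‖π‖ ^ n := by ring
      exact le_of_mul_le_mul_left h3 hπ0
    rw [hyy]

end RmLemmas
section TruncLemmas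

variable {π : K} {𝒯 : Set K} {q : ℕ} (hK : LocalFieldData π 𝒯 q)
include hK

lemma exists_trunc {x : K} (hx : ‖x‖ ≤ 1) (m : ℕ) :
    ∃ s, s ∈ Rm π 𝒯 m ∧ ‖x - s‖ ≤ ‖π‖ ^ m := by
  induction m with
  | zero => exact ⟨0, zero_mem_Rm hK 0, by simpa using hx⟩
  | succ n ih =>
    obtain ⟨s, hs, hxs⟩ := ih
    have hπ0 := norm_pi_pos hK
    have hpn : (0:ℝ) < ‖π‖ ^ n := pow_pos hπ0 n
    have hpow : π ^ n ≠ 0 := pow_ne_zero n (pi_ne_zero hK)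
    set y := (x - s) / π ^ n with hy
    have hy1 : ‖y‖ ≤ 1 := by
      rw [hy, norm_div, norm_pow, div_le_one hpn]
      exact hxs
    obtain ⟨t, ⟨ht, hyt⟩, _⟩ := hK.rep_unique y hy1
    have hyt' : ‖y - t‖ ≤ ‖π‖ := by
      have := norm_le_pow_succ hK (m := 0) (by simpa using hyt)
      simpa using this
    refine ⟨s + t * π ^ n, Rm_snoc hK hs ht, ?_⟩
    have hxe : x - (s + t * π ^ n) = π ^ n * (y - t) := by
      rw [hy]; field_simp; ring
    rw [hxe, norm_mul, norm_pow, pow_succ]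
    exact mul_le_mul_of_nonneg_left hyt' hpn.le

lemma trunc_spec {x : K} (hx : ‖x‖ ≤ 1) (m : ℕ) :
    trunc π 𝒯 x m ∈ Rm π 𝒯 m ∧ ‖x - trunc π 𝒯 x m‖ ≤ ‖π‖ ^ m := by
  have := Classical.epsilon_spec (exists_trunc hK hx m)
  exact this

lemma norm_trunc_le_one {x : K} (hx : ‖x‖ ≤ 1) (m : ℕ) : ‖trunc π 𝒯 x m‖ ≤ 1 :=
  norm_le_one_of_mem_Rm hK (trunc_spec hK hx m).1

lemma trunc_eq {x s : K} (hx : ‖x‖ ≤ 1) {m : ℕ} (hs : s ∈ Rm π 𝒯 m)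
    (h : ‖x - s‖ ≤ ‖π‖ ^ m) : trunc π 𝒯 x m = s := by
  obtain ⟨h1, h2⟩ := trunc_spec hK hx m
  refine Rm_unique hK m h1 hs ?_
  calc ‖trunc π 𝒯 x m - s‖ ≤ max ‖trunc π 𝒯 x m - x‖ ‖x - s‖ := usub
    _ ≤ ‖π‖ ^ m := max_le (by rwa [norm_sub_rev]) h

lemma mem_RR_of_mem_Rm {r : K} {m : ℕ} (h : r ∈ Rm π 𝒯 m) : r ∈ RR π 𝒯 :=
  Set.mem_iUnion.mpr ⟨m, h⟩

lemma zero_mem_RR : (0 : K) ∈ RR π 𝒯 := mem_RR_of_mem_Rm hK (zero_mem_Rm hK 0)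

omit hK in
lemma mem_Rm_len {r : K} (hr : r ∈ RR π 𝒯) : r ∈ Rm π 𝒯 (len π 𝒯 r) := by
  obtain ⟨m, hm⟩ := Set.mem_iUnion.mp hr
  exact Nat.sInf_mem (s := {n | r ∈ Rm π 𝒯 n}) ⟨m, hm⟩

omit hK in
lemma len_le {r : K} {m : ℕ} (h : r ∈ Rm π 𝒯 m) : len π 𝒯 r ≤ m := Nat.sInf_le h

lemma norm_le_one_of_mem_RR {r : K} (hr : r ∈ RR π 𝒯) : ‖r‖ ≤ 1 :=
  norm_le_one_of_mem_Rm hK (mem_Rm_len hr)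

lemma len_pos {r : K} (hr : r ∈ RR π 𝒯) (h0 : r ≠ 0) : 0 < len π 𝒯 r := by
  rcases Nat.eq_zero_or_pos (len π 𝒯 r) with h | h
  · exact absurd (Rm_zero_eq hK (h ▸ mem_Rm_len hr)) h0
  · exact h

lemma rminus_spec {r : K} (hr : r ∈ RR π 𝒯) :
    rminus π 𝒯 r ∈ Rm π 𝒯 (len π 𝒯 r - 1) ∧
      ‖r - rminus π 𝒯 r‖ ≤ ‖π‖ ^ (len π 𝒯 r - 1) :=
  trunc_spec hK (norm_le_one_of_mem_RR hK hr) _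

lemma rminus_mem_Rint {r : K} (hr : r ∈ RR π 𝒯) : ‖rminus π 𝒯 r‖ ≤ 1 :=
  norm_le_one_of_mem_Rm hK (rminus_spec hK hr).1

lemma rminus_ne {r : K} (hr : r ∈ RR π 𝒯) (h0 : r ≠ 0) : r ≠ rminus π 𝒯 r := by
  intro h
  have h1 := (rminus_spec hK hr).1
  rw [← h] at h1
  have h2 := len_le h1
  have h3 := len_pos hK hr h0
  omega

lemma gamma_eq {r : K} (h0 : r ≠ 0) : gamma π 𝒯 r = r - rminus π 𝒯 r := by
  rw [gamma, if_neg h0]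

lemma gamma_ne_zero {r : K} (hr : r ∈ RR π 𝒯) (h0 : r ≠ 0) : gamma π 𝒯 r ≠ 0 := by
  rw [gamma_eq hK h0]
  exact sub_ne_zero_of_ne (rminus_ne hK hr h0)

lemma norm_gamma_le {r : K} (hr : r ∈ RR π 𝒯) (h0 : r ≠ 0) :
    ‖gamma π 𝒯 r‖ ≤ ‖π‖ ^ (len π 𝒯 r - 1) := by
  rw [gamma_eq hK h0]
  exact (rminus_spec hK hr).2

end TruncLemmas
section Compactness

variable {π : K} {𝒯 : Set K} {q : ℕ} (hK : LocalFieldData π 𝒯 q)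

lemma Rm_eq_image (m : ℕ) :
    Rm π 𝒯 m = (fun a : Fin m → K => ∑ i, a i * π ^ (i : ℕ)) ''
      (Set.univ.pi fun _ => 𝒯) := by
  ext x
  constructor
  · rintro ⟨a, ha, rfl⟩
    exact ⟨a, fun i _ => ha i, rfl⟩
  · rintro ⟨a, ha, rfl⟩
    exact ⟨a, fun i => ha i (Set.mem_univ i), rfl⟩

include hK in
lemma Rm_finite (m : ℕ) : (Rm π 𝒯 m).Finite := by
  rw [Rm_eq_image]
  exact (Set.Finite.pi fun _ => hK.finite_rep).image _

lemma isClosed_Rint : IsClosed (Rint K) :=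
  isClosed_le continuous_norm continuous_const

include hK in
lemma isCompact_Rint : IsCompact (Rint K) := by
  refine TotallyBounded.isCompact_of_isClosed ?_ isClosed_Rint
  rw [Metric.totallyBounded_iff]
  intro ε hε
  obtain ⟨m, hm⟩ := exists_pow_lt_of_lt_one hε (norm_pi_lt_one hK)
  refine ⟨Rm π 𝒯 m, Rm_finite hK m, fun x hx => ?_⟩
  have hx1 : ‖x‖ ≤ 1 := hx
  refine Set.mem_biUnion (trunc_spec hK hx1 m).1 ?_
  rw [Metric.mem_ball, dist_eq_norm]
  exact lt_of_le_of_lt (trunc_spec hK hx1 m).2 hm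

include hK in
lemma isCompact_S : IsCompact {x : Fin 2 → K | ∀ i, ‖x i‖ ≤ 1} := by
  have : {x : Fin 2 → K | ∀ i, ‖x i‖ ≤ 1} = Set.univ.pi fun _ : Fin 2 => Rint K := by
    ext x
    simp [Set.mem_pi, Rint]
  rw [this]
  exact isCompact_univ_pi fun _ => isCompact_Rint hK

end Compactness

section CnLemmas

variable {π : K} {𝒯 : Set K} {q : ℕ}

lemma pair_mem_S {x y : K} (hx : ‖x‖ ≤ 1) (hy : ‖y‖ ≤ 1) :
    ∀ i, ‖(![x, y]) i‖ ≤ 1 := by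
  intro i
  fin_cases i <;> simpa

lemma Phi_one_pair (f : K → K) (x y : K) :
    Phi f 1 ![x, y] = (f x - f y) / (x - y) := by
  rw [Phi_one]
  simp

/-- A `C¹` function is Lipschitz on `R`, with constant the bound of its extension. -/
lemma IsCn.exists_lipschitz {f : K → K} (hK : LocalFieldData π 𝒯 q) (hf : IsCn f 1) :
    ∃ C : ℝ, 0 ≤ C ∧ ∀ x y : K, ‖x‖ ≤ 1 → ‖y‖ ≤ 1 → ‖f x - f y‖ ≤ C * ‖x - y‖ := by
  obtain ⟨g, hgc, hge⟩ := hf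
  obtain ⟨C, hC⟩ := (isCompact_S hK).exists_bound_of_continuousOn hgc
  have hC0 : 0 ≤ C := le_trans (norm_nonneg _) (hC (fun _ => 0) (by simp))
  refine ⟨C, hC0, fun x y hx hy => ?_⟩
  rcases eq_or_ne x y with rfl | hxy
  · simp
  · have hmem : ∀ i, ‖(![x, y]) i‖ ≤ 1 := pair_mem_S hx hy
    have hinj : Function.Injective ![x, y] := by
      apply inj2
      simpa using hxy
    have := hge ![x, y] hmem hinj
    rw [Phi_one_pair] at this
    have hxy' : x - y ≠ 0 := sub_ne_zero_of_ne hxy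
    have heq : f x - f y = g ![x, y] * (x - y) := by
      rw [this, div_mul_cancel₀ _ hxy']
    rw [heq, norm_mul]
    exact mul_le_mul_of_nonneg_right (hC _ hmem) (norm_nonneg _)

lemma IsCn.sub' {f g : K → K} (hf : IsCn f 1) (hg : IsCn g 1) : IsCn (f - g) 1 := by
  obtain ⟨F, hFc, hFe⟩ := hf
  obtain ⟨G, hGc, hGe⟩ := hg
  refine ⟨F - G, hFc.sub hGc, fun x hx hinj => ?_⟩
  have h1 := hFe x hx hinj
  have h2 := hGe x hx hinj
  rw [Pi.sub_apply, h1, h2, Phi_one, Phi_one, Phi_one]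
  simp only [Pi.sub_apply]
  rw [div_sub_div_same]
  ring_nf

end CnLemmas
section KeyLemma

variable {π : K} {𝒯 : Set K} {q : ℕ} (hK : LocalFieldData π 𝒯 q)
include hK

lemma b0_zero (f : K → K) : b0 π 𝒯 f 0 * (gamma π 𝒯 0)⁻¹ = f 0 := by
  rw [b0, gamma, if_pos rfl, if_pos rfl, inv_one, mul_one]

lemma b0_ne_zero (f : K → K) {r : K} (h : r ≠ 0) :
    b0 π 𝒯 f r = f r - f (rminus π 𝒯 r) := by
  rw [b0, if_neg h]

lemma chain_step {f : K → K} {W : ℝ}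
    (hW : ∀ r ∈ RR π 𝒯, ‖b0 π 𝒯 f r * (gamma π 𝒯 r)⁻¹‖ ≤ W)
    {x : K} (hx : ‖x‖ ≤ 1) (M : ℕ) :
    ‖f (trunc π 𝒯 x (M + 1)) - f (trunc π 𝒯 x M)‖ ≤ W * ‖π‖ ^ M := by
  have hW0 : 0 ≤ W := le_trans (norm_nonneg _) (hW 0 (zero_mem_RR hK))
  have hπ0 := norm_pi_pos hK
  have hπ1 := norm_pi_lt_one hK
  have hWp : 0 ≤ W * ‖π‖ ^ M := by positivity
  set r := trunc π 𝒯 x (M + 1) with hrdef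
  rcases eq_or_ne r (trunc π 𝒯 x M) with h | h
  · rw [h, sub_self, norm_zero]; exact hWp
  have hrRm : r ∈ Rm π 𝒯 (M + 1) := (trunc_spec hK hx (M + 1)).1
  have hrRR : r ∈ RR π 𝒯 := mem_RR_of_mem_Rm hK hrRm
  have hxr : ‖x - r‖ ≤ ‖π‖ ^ (M + 1) := (trunc_spec hK hx (M + 1)).2
  have hxrM : ‖x - r‖ ≤ ‖π‖ ^ M :=
    hxr.trans (pow_le_pow_of_le_one hπ0.le hπ1.le (by omega))
  have h0 : r ≠ 0 := by
    intro h0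
    apply h
    rw [h0, trunc_eq hK hx (zero_mem_Rm hK M) (by rw [sub_zero]; rw [h0] at hxrM; simpa using hxrM)]
  have hlen : len π 𝒯 r = M + 1 := by
    refine le_antisymm (len_le hrRm) ?_
    by_contra hc
    push_neg at hc
    have hrM : r ∈ Rm π 𝒯 M := Rm_mono hK (by omega) (mem_Rm_len hrRR)
    exact h (trunc_eq hK hx hrM hxrM).symm
  have hrm : rminus π 𝒯 r = trunc π 𝒯 x M := by
    rw [rminus, hlen, Nat.add_sub_cancel]
    refine trunc_eq hK (norm_le_one_of_mem_RR hK hrRR) (trunc_spec hK hx M).1 ?_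
    calc ‖r - trunc π 𝒯 x M‖ ≤ max ‖r - x‖ ‖x - trunc π 𝒯 x M‖ := usub
      _ ≤ ‖π‖ ^ M := max_le (by rw [norm_sub_rev]; exact hxrM) (trunc_spec hK hx M).2
  have hγ : gamma π 𝒯 r ≠ 0 := gamma_ne_zero hK hrRR h0
  have hb : f r - f (trunc π 𝒯 x M) = b0 π 𝒯 f r * (gamma π 𝒯 r)⁻¹ * gamma π 𝒯 r := by
    rw [b0_ne_zero hK f h0, hrm]
    field_simp
  rw [hb, norm_mul]
  have h1 : ‖gamma π 𝒯 r‖ ≤ ‖π‖ ^ M := by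
    have := norm_gamma_le hK hrRR h0
    rwa [hlen, Nat.add_sub_cancel] at this
  exact mul_le_mul (hW r hrRR) h1 (norm_nonneg _) hW0

lemma chain_bound {f : K → K} {W : ℝ}
    (hW : ∀ r ∈ RR π 𝒯, ‖b0 π 𝒯 f r * (gamma π 𝒯 r)⁻¹‖ ≤ W)
    {x : K} (hx : ‖x‖ ≤ 1) (m : ℕ) :
    ∀ M, m ≤ M → ‖f (trunc π 𝒯 x M) - f (trunc π 𝒯 x m)‖ ≤ W * ‖π‖ ^ m := by
  have hW0 : 0 ≤ W := le_trans (norm_nonneg _) (hW 0 (zero_mem_RR hK))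
  have hπ0 := norm_pi_pos hK
  have hπ1 := norm_pi_lt_one hK
  intro M
  induction M with
  | zero =>
    intro h
    have : m = 0 := by omega
    subst this
    rw [sub_self, norm_zero]
    positivity
  | succ n ih =>
    intro h
    rcases Nat.lt_or_ge m (n + 1) with h' | h'
    · have hmn : m ≤ n := by omega
      calc ‖f (trunc π 𝒯 x (n + 1)) - f (trunc π 𝒯 x m)‖
          ≤ max ‖f (trunc π 𝒯 x (n + 1)) - f (trunc π 𝒯 x n)‖
              ‖f (trunc π 𝒯 x n) - f (trunc π 𝒯 x m)‖ := usub
        _ ≤ W * ‖π‖ ^ m := by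
            refine max_le ((chain_step hK hW hx n).trans ?_) (ih hmn)
            exact mul_le_mul_of_nonneg_left
              (pow_le_pow_of_le_one hπ0.le hπ1.le hmn) hW0
    · have : m = n + 1 := by omega
      subst this
      rw [sub_self, norm_zero]
      positivity

lemma dist_to_trunc {f : K → K} {C W : ℝ}
    (hf : ∀ x y : K, ‖x‖ ≤ 1 → ‖y‖ ≤ 1 → ‖f x - f y‖ ≤ C * ‖x - y‖)
    (hW : ∀ r ∈ RR π 𝒯, ‖b0 π 𝒯 f r * (gamma π 𝒯 r)⁻¹‖ ≤ W)
    {x : K} (hx : ‖x‖ ≤ 1) (m : ℕ) :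
    ‖f x - f (trunc π 𝒯 x m)‖ ≤ W * ‖π‖ ^ m := by
  have hW0 : 0 ≤ W := le_trans (norm_nonneg _) (hW 0 (zero_mem_RR hK))
  have hπ0 := norm_pi_pos hK
  have hπ1 := norm_pi_lt_one hK
  set C' : ℝ := max C 0 with hC'
  have hC'0 : 0 ≤ C' := le_max_right _ _
  have hf' : ∀ x y : K, ‖x‖ ≤ 1 → ‖y‖ ≤ 1 → ‖f x - f y‖ ≤ C' * ‖x - y‖ :=
    fun x y hx hy => (hf x y hx hy).trans
      (mul_le_mul_of_nonneg_right (le_max_left _ _) (norm_nonneg _))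
  refine le_of_forall_pos_le_add fun ε hε => ?_
  have htd : Filter.Tendsto (fun M : ℕ => C' * ‖π‖ ^ M) Filter.atTop (nhds 0) := by
    have := tendsto_pow_atTop_nhds_zero_of_lt_one hπ0.le hπ1
    simpa using this.const_mul C'
  have hev : ∀ᶠ M in Filter.atTop, C' * ‖π‖ ^ M < ε :=
    htd.eventually (gt_mem_nhds hε)
  obtain ⟨M, hM1, hM2⟩ := (hev.and (Filter.eventually_ge_atTop m)).exists
  calc ‖f x - f (trunc π 𝒯 x m)‖
      ≤ max ‖f x - f (trunc π 𝒯 x M)‖ ‖f (trunc π 𝒯 x M) - f (trunc π 𝒯 x m)‖ := usub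
    _ ≤ W * ‖π‖ ^ m + ε := by
        refine max_le ?_ ?_
        · have h1 : ‖f x - f (trunc π 𝒯 x M)‖ ≤ C' * ‖x - trunc π 𝒯 x M‖ :=
            hf' x _ hx (norm_trunc_le_one hK hx M)
          have h2 : C' * ‖x - trunc π 𝒯 x M‖ ≤ C' * ‖π‖ ^ M :=
            mul_le_mul_of_nonneg_left (trunc_spec hK hx M).2 hC'0
          have : ‖f x - f (trunc π 𝒯 x M)‖ < ε := lt_of_le_of_lt (h1.trans h2) hM1
          have hp : 0 ≤ W * ‖π‖ ^ m := by positivity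
          linarith
        · have := chain_bound hK hW hx m M hM2
          have hp : 0 ≤ ε := hε.le
          linarith

/-- Key estimate: the wavelet norm controls the Lipschitz norm. -/
lemma lipschitz_of_wnorm {f : K → K} {C W : ℝ}
    (hf : ∀ x y : K, ‖x‖ ≤ 1 → ‖y‖ ≤ 1 → ‖f x - f y‖ ≤ C * ‖x - y‖)
    (hW : ∀ r ∈ RR π 𝒯, ‖b0 π 𝒯 f r * (gamma π 𝒯 r)⁻¹‖ ≤ W) :
    ∀ x y : K, ‖x‖ ≤ 1 → ‖y‖ ≤ 1 → ‖f x - f y‖ ≤ W * ‖x - y‖ := by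
  have hW0 : 0 ≤ W := le_trans (norm_nonneg _) (hW 0 (zero_mem_RR hK))
  have hπ0 := norm_pi_pos hK
  have hπ1 := norm_pi_lt_one hK
  intro x y hx hy
  rcases eq_or_ne x y with rfl | hxy
  · simp
  have hd : x - y ≠ 0 := sub_ne_zero_of_ne hxy
  have h1 : ‖x - y‖ ≤ 1 := umax.trans (max_le hx hy)
  obtain ⟨n, hn⟩ := hK.norm_discrete (x - y) hd
  have hn0 : 0 ≤ n := by
    by_contra hc
    push_neg at hc
    have h2 : ‖π‖ ^ (0 : ℤ) ≤ ‖π‖ ^ n := by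
      refine (zpow_le_zpow_iff_right_of_lt_one₀ hπ0 hπ1).mpr hc.le
    rw [zpow_zero] at h2
    have : ‖π‖ ^ n = 1 := le_antisymm (hn ▸ h1) h2
    have hne : ‖π‖ ^ n ≠ 1 := by
      intro hee
      have : n = 0 := by
        by_contra hnz
        rcases lt_or_gt_of_ne hnz with hl | hg
        · have := (zpow_lt_zpow_iff_right_of_lt_one₀ hπ0 hπ1).mpr hl
          rw [zpow_zero, hee] at this
          exact lt_irrefl _ this
        · have := (zpow_lt_zpow_iff_right_of_lt_one₀ hπ0 hπ1).mpr hg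
          rw [zpow_zero, hee] at this
          exact lt_irrefl _ this
      omega
    exact hne this
  set m := n.toNat with hm
  have hxy' : ‖x - y‖ = ‖π‖ ^ m := by
    rw [hn, hm, ← zpow_natCast, Int.toNat_of_nonneg hn0]
  have hteq : trunc π 𝒯 y m = trunc π 𝒯 x m := by
    refine trunc_eq hK hy (trunc_spec hK hx m).1 ?_
    calc ‖y - trunc π 𝒯 x m‖ ≤ max ‖y - x‖ ‖x - trunc π 𝒯 x m‖ := usub
      _ ≤ ‖π‖ ^ m := max_le (by rw [norm_sub_rev, hxy']) (trunc_spec hK hx m).2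
  rw [hxy']
  calc ‖f x - f y‖
      ≤ max ‖f x - f (trunc π 𝒯 x m)‖ ‖f (trunc π 𝒯 x m) - f y‖ := usub
    _ ≤ W * ‖π‖ ^ m := by
        refine max_le (dist_to_trunc hK hf hW hx m) ?_
        rw [norm_sub_rev, ← hteq]
        exact dist_to_trunc hK hf hW hy m

lemma sup_of_wnorm {f : K → K} {C W : ℝ}
    (hf : ∀ x y : K, ‖x‖ ≤ 1 → ‖y‖ ≤ 1 → ‖f x - f y‖ ≤ C * ‖x - y‖)
    (hW : ∀ r ∈ RR π 𝒯, ‖b0 π 𝒯 f r * (gamma π 𝒯 r)⁻¹‖ ≤ W) :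
    ∀ x : K, ‖x‖ ≤ 1 → ‖f x‖ ≤ W := by
  have hW0 : 0 ≤ W := le_trans (norm_nonneg _) (hW 0 (zero_mem_RR hK))
  intro x hx
  have h0 : ‖f 0‖ ≤ W := by
    have := hW 0 (zero_mem_RR hK)
    rwa [b0_zero hK] at this
  have h1 : ‖f x - f 0‖ ≤ W := by
    have := lipschitz_of_wnorm hK hf hW x 0 hx (by simp)
    rw [sub_zero] at this
    refine this.trans ?_
    calc W * ‖x‖ ≤ W * 1 := mul_le_mul_of_nonneg_left hx hW0
      _ = W := mul_one _
  calc ‖f x‖ = ‖(f x - f 0) + f 0‖ := by ring_nf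
    _ ≤ max ‖f x - f 0‖ ‖f 0‖ := IsUltrametricDist.norm_add_le_max _ _
    _ ≤ W := max_le h1 h0

end KeyLemma
section WnormLemmas

variable {π : K} {𝒯 : Set K} {q : ℕ}

lemma wnorm_le_iff {f : K → K} {ε : ℝ≥0∞} :
    wnorm1 π 𝒯 f ≤ ε ↔
      ∀ r ∈ RR π 𝒯, (‖b0 π 𝒯 f r * (gamma π 𝒯 r)⁻¹‖₊ : ℝ≥0∞) ≤ ε := by
  rw [wnorm1, iSup_le_iff]
  exact Subtype.forall

lemma wnorm_real_bound (hK : LocalFieldData π 𝒯 q) {f : K → K} {ε : ℝ≥0∞} (hε : ε ≠ ⊤)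
    (h : wnorm1 π 𝒯 f ≤ ε) :
    ∀ r ∈ RR π 𝒯, ‖b0 π 𝒯 f r * (gamma π 𝒯 r)⁻¹‖ ≤ ε.toReal := by
  intro r hr
  have h1 := wnorm_le_iff.mp h r hr
  have h2 := ENNReal.toReal_mono hε h1
  simpa using h2

lemma wnorm_le_ofReal (hK : LocalFieldData π 𝒯 q) {f : K → K} {e : ℝ}
    (h : ∀ r ∈ RR π 𝒯, ‖b0 π 𝒯 f r * (gamma π 𝒯 r)⁻¹‖ ≤ e) :
    wnorm1 π 𝒯 f ≤ ENNReal.ofReal e := by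
  rw [wnorm_le_iff]
  intro r hr
  rw [← ENNReal.ofReal_coe_nnreal, coe_nnnorm]
  exact ENNReal.ofReal_le_ofReal (h r hr)

/-- Part 1: the wavelet norm of a `C¹` function is finite. -/
lemma wnorm_lt_top (hK : LocalFieldData π 𝒯 q) (f : K → K) (hf : IsCn f 1) :
    wnorm1 π 𝒯 f < ⊤ := by
  obtain ⟨g, hgc, hge⟩ := hf
  obtain ⟨C, hC⟩ := (isCompact_S hK).exists_bound_of_continuousOn hgc
  refine lt_of_le_of_lt (wnorm_le_ofReal hK (e := max C ‖f 0‖) ?_) ENNReal.ofReal_lt_top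
  intro r hr
  rcases eq_or_ne r 0 with rfl | h0
  · rw [b0_zero hK]
    exact le_max_right _ _
  · have hrR : ‖r‖ ≤ 1 := norm_le_one_of_mem_RR hK hr
    have hrmR : ‖rminus π 𝒯 r‖ ≤ 1 := rminus_mem_Rint hK hr
    have hmem := pair_mem_S hrR hrmR
    have hne : r ≠ rminus π 𝒯 r := rminus_ne hK hr h0
    have hinj : Function.Injective ![r, rminus π 𝒯 r] := by
      apply inj2
      simpa using hne
    have heq := hge _ hmem hinj
    rw [Phi_one_pair] at heq
    have : b0 π 𝒯 f r * (gamma π 𝒯 r)⁻¹ = g ![r, rminus π 𝒯 r] := by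
      rw [heq, b0_ne_zero hK f h0, gamma_eq hK h0, div_eq_mul_inv]
    rw [this]
    exact (hC _ hmem).trans (le_max_left _ _)

end WnormLemmas
section Master

set_option linter.unusedVariables false

variable {π : K} {𝒯 : Set K} {q : ℕ} (hK : LocalFieldData π 𝒯 q)
include hK

lemma diff_est {f : K → K} (hf : IsCn f 1) {ε : ℝ≥0∞} (hε : ε ≠ ⊤)
    (h : wnorm1 π 𝒯 f ≤ ε) :
    (∀ x y : K, ‖x‖ ≤ 1 → ‖y‖ ≤ 1 → ‖f x - f y‖ ≤ ε.toReal * ‖x - y‖) ∧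
    (∀ x : K, ‖x‖ ≤ 1 → ‖f x‖ ≤ ε.toReal) := by
  obtain ⟨C, hC0, hC⟩ := hf.exists_lipschitz hK
  have hW := wnorm_real_bound hK hε h
  exact ⟨lipschitz_of_wnorm hK hC hW, sup_of_wnorm hK hC hW⟩

lemma cauchy_limit (F : ℕ → K → K) (hF : ∀ m, IsCn (F m) 1)
    (hC : ∀ ε : ℝ≥0∞, 0 < ε → ∃ N : ℕ, ∀ k l : ℕ, N ≤ k → N ≤ l →
      wnorm1 π 𝒯 (F k - F l) < ε) :
    ∃ g : K → K, IsCn g 1 ∧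
      (∀ x : K, ‖x‖ ≤ 1 → Tendsto (fun m => F m x) atTop (𝓝 (g x))) ∧
      Tendsto (fun m => wnorm1 π 𝒯 (F m - g)) atTop (𝓝 0) := by
  have hπ1 := norm_pi_lt_one hK
  -- real form of the Cauchy hypothesis
  have key : ∀ e : ℝ, 0 < e → ∃ N : ℕ, ∀ k l : ℕ, N ≤ k → N ≤ l →
      (∀ x y : K, ‖x‖ ≤ 1 → ‖y‖ ≤ 1 →
        ‖(F k x - F l x) - (F k y - F l y)‖ ≤ e * ‖x - y‖) ∧
      (∀ x : K, ‖x‖ ≤ 1 → ‖F k x - F l x‖ ≤ e) := by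
    intro e he
    obtain ⟨N, hN⟩ := hC (ENNReal.ofReal e) (by simpa using he)
    refine ⟨N, fun k l hk hl => ?_⟩
    have h1 := diff_est hK ((hF k).sub' (hF l)) ENNReal.ofReal_ne_top (hN k l hk hl).le
    rw [ENNReal.toReal_ofReal he.le] at h1
    constructor
    · intro x y hx hy
      have := h1.1 x y hx hy
      simpa [Pi.sub_apply] using this
    · intro x hx
      have := h1.2 x hx
      simpa [Pi.sub_apply] using this
  -- pointwise limit g
  have hcau : ∀ x : K, ‖x‖ ≤ 1 → CauchySeq (fun m => F m x) := by
    intro x hx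
    rw [Metric.cauchySeq_iff]
    intro e he
    obtain ⟨N, hN⟩ := key (e / 2) (by linarith)
    refine ⟨N, fun k hk l hl => ?_⟩
    rw [dist_eq_norm]
    exact lt_of_le_of_lt ((hN k l hk hl).2 x hx) (by linarith)
  set g : K → K := fun x => limUnder atTop (fun m => F m x) with hgdef
  have hgt : ∀ x : K, ‖x‖ ≤ 1 → Tendsto (fun m => F m x) atTop (𝓝 (g x)) :=
    fun x hx => (hcau x hx).tendsto_limUnder
  -- the sequence of continuous extensions
  choose φ hφc hφe using hF
  set S : Set (Fin 2 → K) := {x | ∀ i, ‖x i‖ ≤ 1} with hSdef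
  have hucau : UniformCauchySeqOn φ atTop S := by
    rw [Metric.uniformCauchySeqOn_iff]
    intro e he
    obtain ⟨N, hN⟩ := key (e / 2) (by linarith)
    refine ⟨N, fun k hk l hl z hz => ?_⟩
    rw [dist_eq_norm]
    refine lt_of_le_of_lt ?_ (by linarith : e / 2 < e)
    have hbound : ∀ w : Fin 2 → K, (∀ i, ‖w i‖ ≤ 1) → w 0 ≠ w 1 →
        ‖φ k w - φ l w‖ ≤ e / 2 := by
      intro w hw hne
      have hj := inj2 hne
      rw [hφe k w hw hj, hφe l w hw hj, Phi_one, Phi_one, div_sub_div_same, norm_div]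
      have h2 := (hN k l hk hl).1 (w 0) (w 1) (hw 0) (hw 1)
      have hd0 : 0 < ‖w 0 - w 1‖ := by
        rw [norm_pos_iff]
        exact sub_ne_zero_of_ne hne
      rw [div_le_iff₀ hd0]
      have hre : F k (w 0) - F k (w 1) - (F l (w 0) - F l (w 1))
          = F k (w 0) - F l (w 0) - (F k (w 1) - F l (w 1)) := by ring
      rw [hre]
      exact h2
    rcases eq_or_ne (z 0) (z 1) with heq | hne
    · set w : ℕ → Fin 2 → K := fun j i => z i + (if i = 0 then π ^ (j + 1) else 0)
        with hwdef
      have hwS : ∀ j, ∀ i, ‖w j i‖ ≤ 1 := by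
        intro j i
        rcases eq_or_ne i 0 with rfl | hi
        · simp only [hwdef, eq_self_iff_true, if_true]
          refine (IsUltrametricDist.norm_add_le_max _ _).trans (max_le (hz 0) ?_)
          rw [norm_pow]
          exact pow_le_one₀ (norm_nonneg _) (norm_pi_le_one hK)
        · simp only [hwdef, if_neg hi, add_zero]
          exact hz i
      have hwne : ∀ j, w j 0 ≠ w j 1 := by
        intro j h
        simp only [hwdef, if_pos rfl, if_neg (by decide : (1 : Fin 2) ≠ 0),
          add_zero] at h
        rw [heq] at h
        exact pow_ne_zero (j + 1) (pi_ne_zero hK) (add_eq_left.mp h)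
      have hwt : Tendsto w atTop (𝓝 z) := by
        rw [tendsto_pi_nhds]
        intro i
        rcases eq_or_ne i 0 with rfl | hi
        · simp only [hwdef, eq_self_iff_true, if_true]
          have h0 : Tendsto (fun j : ℕ => π ^ (j + 1)) atTop (𝓝 0) :=
            (tendsto_pow_atTop_nhds_zero_of_norm_lt_one hπ1).comp
              (tendsto_add_atTop_nat 1)
          simpa using tendsto_const_nhds.add h0
        · simp only [hwdef, if_neg hi, add_zero]
          exact tendsto_const_nhds
      have hcont : ContinuousWithinAt (fun y => φ k y - φ l y) S z :=
        (((hφc k).sub (hφc l)) z hz)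
      have hwt' : Tendsto w atTop (𝓝[S] z) :=
        tendsto_nhdsWithin_of_tendsto_nhds_of_eventually_within w hwt
          (Filter.Eventually.of_forall fun j => hwS j)
      have hlim : Tendsto (fun j => φ k (w j) - φ l (w j)) atTop
          (𝓝 (φ k z - φ l z)) := hcont.tendsto.comp hwt'
      exact le_of_tendsto hlim.norm
        (Filter.Eventually.of_forall fun j => hbound (w j) (hwS j) (hwne j))
    · exact hbound z hz hne
  set G : (Fin 2 → K) → K := fun z => limUnder atTop (fun m => φ m z) with hGdef
  have hGt : ∀ z ∈ S, Tendsto (fun m => φ m z) atTop (𝓝 (G z)) :=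
    fun z hz => (hucau.cauchySeq hz).tendsto_limUnder
  have hunif : TendstoUniformlyOn φ G atTop S :=
    hucau.tendstoUniformlyOn_of_tendsto hGt
  have hGc : ContinuousOn G S := hunif.continuousOn (Filter.Eventually.of_forall hφc).frequently
  have hgC1 : IsCn g 1 := by
    refine ⟨G, hGc, fun z hz hinj => ?_⟩
    have hne := inj2' hinj
    have h1 : Tendsto (fun m => φ m z) atTop (𝓝 (G z)) := hGt z hz
    have h2 : Tendsto (fun m => φ m z) atTop (𝓝 (Phi g 1 z)) := by
      have he : (fun m => φ m z) = fun m => (F m (z 0) - F m (z 1)) / (z 0 - z 1) :=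
        funext fun m => by rw [hφe m z hz hinj, Phi_one]
      rw [he, Phi_one]
      exact ((hgt (z 0) (hz 0)).sub (hgt (z 1) (hz 1))).div_const _
    exact tendsto_nhds_unique h1 h2
  refine ⟨g, hgC1, hgt, ?_⟩
  rw [ENNReal.tendsto_nhds_zero]
  intro ε hε
  rcases eq_or_ne ε ⊤ with rfl | hεt
  · exact Filter.Eventually.of_forall fun m => le_top
  obtain ⟨N, hN⟩ := hC ε hε
  rw [Filter.eventually_atTop]
  refine ⟨N, fun m hm => ?_⟩
  have hfin : wnorm1 π 𝒯 (F m - g) ≤ ENNReal.ofReal ε.toReal := by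
    refine wnorm_le_ofReal hK ?_
    intro r hr
    have hrR : ‖r‖ ≤ 1 := norm_le_one_of_mem_RR hK hr
    have hlim : Tendsto (fun l => b0 π 𝒯 (F m - F l) r * (gamma π 𝒯 r)⁻¹) atTop
        (𝓝 (b0 π 𝒯 (F m - g) r * (gamma π 𝒯 r)⁻¹)) := by
      rcases eq_or_ne r 0 with rfl | h0
      · simp only [b0, if_pos rfl, Pi.sub_apply]
        exact (tendsto_const_nhds.sub (hgt 0 (by simp))).mul_const _
      · simp only [b0, if_neg h0, Pi.sub_apply]
        have hrm : ‖rminus π 𝒯 r‖ ≤ 1 := rminus_mem_Rint hK hr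
        exact ((tendsto_const_nhds.sub (hgt r hrR)).sub
          (tendsto_const_nhds.sub (hgt _ hrm))).mul_const _
    have hbnd : ∀ l ≥ N, ‖b0 π 𝒯 (F m - F l) r * (gamma π 𝒯 r)⁻¹‖ ≤ ε.toReal :=
      fun l hl => wnorm_real_bound hK hεt (hN m l hm hl).le r hr
    exact le_of_tendsto hlim.norm (Filter.eventually_atTop.mpr ⟨N, hbnd⟩)
  rwa [ENNReal.ofReal_toReal hεt] at hfin

end Master
section Deriv

variable {π : K} {𝒯 : Set K} {q : ℕ} (hK : LocalFieldData π 𝒯 q)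
include hK

lemma deriv_zero_limit (F : ℕ → K → K) (g : K → K)
    (hF : ∀ m, IsCn (F m) 1)
    (hD : ∀ m, ∀ a ∈ Rint K, HasDerivWithinAt (F m) 0 (Rint K) a)
    (hC : ∀ ε : ℝ≥0∞, 0 < ε → ∃ N : ℕ, ∀ k l : ℕ, N ≤ k → N ≤ l →
      wnorm1 π 𝒯 (F k - F l) < ε)
    (hgt : ∀ x : K, ‖x‖ ≤ 1 → Tendsto (fun m => F m x) atTop (𝓝 (g x))) :
    ∀ a ∈ Rint K, HasDerivWithinAt g 0 (Rint K) a := by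
  intro a ha
  have ha1 : ‖a‖ ≤ 1 := ha
  rw [hasDerivWithinAt_iff_tendsto]
  simp only [smul_zero, sub_zero]
  rw [Metric.tendsto_nhds]
  intro e he
  obtain ⟨N, hN⟩ := hC (ENNReal.ofReal (e / 4)) (ENNReal.ofReal_pos.mpr (by linarith))
  have hkey : ∀ x : K, ‖x‖ ≤ 1 → ‖(g x - F N x) - (g a - F N a)‖ ≤ e / 4 * ‖x - a‖ := by
    intro x hx
    have hlim : Tendsto (fun l => ‖(F l x - F N x) - (F l a - F N a)‖) atTop
        (𝓝 ‖(g x - F N x) - (g a - F N a)‖) :=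
      (((hgt x hx).sub tendsto_const_nhds).sub
        ((hgt a ha1).sub tendsto_const_nhds)).norm
    refine le_of_tendsto hlim ?_
    rw [Filter.eventually_atTop]
    refine ⟨N, fun l hl => ?_⟩
    have h1 := diff_est hK ((hF l).sub' (hF N)) ENNReal.ofReal_ne_top
      (hN l N hl le_rfl).le
    rw [ENNReal.toReal_ofReal (by linarith)] at h1
    have := h1.1 x a hx ha1
    simpa [Pi.sub_apply] using this
  have hDN := hD N a ha
  rw [hasDerivWithinAt_iff_tendsto] at hDN
  simp only [smul_zero, sub_zero] at hDN
  rw [Metric.tendsto_nhds] at hDN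
  have hev := hDN (e / 2) (by linarith)
  filter_upwards [hev, self_mem_nhdsWithin] with x hx1 hx2
  have hx2' : ‖x‖ ≤ 1 := hx2
  rw [Real.dist_eq, sub_zero, abs_of_nonneg (by positivity)] at hx1 ⊢
  rcases eq_or_ne x a with rfl | hxa
  · simpa using he
  have hpos : 0 < ‖x - a‖ := by
    rw [norm_pos_iff]
    exact sub_ne_zero_of_ne hxa
  have hdecomp : g x - g a = ((g x - F N x) - (g a - F N a)) + (F N x - F N a) := by
    ring
  have h3 : ‖g x - g a‖ ≤ max (e / 4 * ‖x - a‖) ‖F N x - F N a‖ := by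
    rw [hdecomp]
    exact (IsUltrametricDist.norm_add_le_max _ _).trans
      (max_le_max (hkey x hx2') le_rfl)
  calc ‖x - a‖⁻¹ * ‖g x - g a‖
      ≤ ‖x - a‖⁻¹ * max (e / 4 * ‖x - a‖) ‖F N x - F N a‖ :=
        mul_le_mul_of_nonneg_left h3 (by positivity)
    _ = max (‖x - a‖⁻¹ * (e / 4 * ‖x - a‖)) (‖x - a‖⁻¹ * ‖F N x - F N a‖) :=
        mul_max_of_nonneg _ _ (by positivity)
    _ < e := by
        refine max_lt ?_ (lt_of_lt_of_le hx1 (by linarith))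
        rw [show ‖x - a‖⁻¹ * (e / 4 * ‖x - a‖) = e / 4 by field_simp]
        linarith

end Deriv
/-- `C¹(R,K)` and `N¹(R,K)` are `K`-Banach spaces with respect to the norm
`|f|₁ = sup_{r ∈ ℛ} |b_r(f)γ_r⁻¹|`: the norm is finite on `C¹`, and every Cauchy sequence
in `C¹(R,K)` (resp. `N¹(R,K)`) converges in the `|·|₁`-norm to an element of the space. -/
theorem statement_9 (π : K) (𝒯 : Set K) (q : ℕ) (hK : LocalFieldData π 𝒯 q) :
    (∀ f : K → K, IsCn f 1 → wnorm1 π 𝒯 f < ⊤) ∧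
    (∀ F : ℕ → K → K, (∀ m, IsCn (F m) 1) →
      (∀ ε : ℝ≥0∞, 0 < ε → ∃ N : ℕ, ∀ k l : ℕ, N ≤ k → N ≤ l →
        wnorm1 π 𝒯 (F k - F l) < ε) →
      ∃ g : K → K, IsCn g 1 ∧
        Tendsto (fun m => wnorm1 π 𝒯 (F m - g)) atTop (𝓝 0)) ∧
    (∀ F : ℕ → K → K,
      (∀ m, IsCn (F m) 1 ∧ ∀ a ∈ Rint K, HasDerivWithinAt (F m) 0 (Rint K) a) →
      (∀ ε : ℝ≥0∞, 0 < ε → ∃ N : ℕ, ∀ k l : ℕ, N ≤ k → N ≤ l →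
        wnorm1 π 𝒯 (F k - F l) < ε) →
      ∃ g : K → K,
        (IsCn g 1 ∧ ∀ a ∈ Rint K, HasDerivWithinAt g 0 (Rint K) a) ∧
        Tendsto (fun m => wnorm1 π 𝒯 (F m - g)) atTop (𝓝 0)) := by
  refine ⟨fun f hf => wnorm_lt_top hK f hf, ?_, ?_⟩
  · intro F hF hC
    obtain ⟨g, h1, _, h3⟩ := cauchy_limit hK F hF hC
    exact ⟨g, h1, h3⟩
  · intro F hF hC
    obtain ⟨g, h1, h2, h3⟩ := cauchy_limit hK F (fun m => (hF m).1) hC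
    exact ⟨g, ⟨h1, deriv_zero_limit hK F g (fun m => (hF m).1)
      (fun m => (hF m).2) hC h2⟩, h3⟩

end DSW
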